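/- Let γ, ν ∈ ℝ^ℓ be nonnegative vectors. Let p, q be distributions on [k] such that p_i + q_i > 0 for all i and the likelihood ratios p_i/q_i (with value +∞ when q_i = 0) are pairwise distinct. Let A := {(Sp, Sq) : S ∈ J^{γ,ν}_{ℓ,k}}. If T ∈ J^{γ,ν}_{ℓ,k} has more than 2ℓ² pairwise distinct columns, then (Tp, Tq) is not an extreme point of A. -/

import Mathlib

open scoped Classical ENNReal
open Finset

noncomputable section

/-- `p` is a probability distribution on `Fin k`. -/
def IsDist {k : ℕ} (p : Fin k → ℝ) : Prop :=
  (∀ i, 0 ≤ p i) ∧ ∑ i, p i = 1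

/-- `T` is a channel from `[k]` to `[ℓ]`: nonnegative entries, columns sum to 1. -/
def IsChannel {ℓ k : ℕ} (T : Matrix (Fin ℓ) (Fin k) ℝ) : Prop :=
  (∀ r c, 0 ≤ T r c) ∧ ∀ c, ∑ r, T r c = 1

/-- Squared Hellinger divergence `d_h²(p,q) = Σ_i (√p_i − √q_i)²`. -/
def hellingerSq {k : ℕ} (p q : Fin k → ℝ) : ℝ :=
  ∑ i, (Real.sqrt (p i) - Real.sqrt (q i)) ^ 2

/-- Total variation distance `d_TV(p,q) = (1/2) Σ_i |p_i − q_i|`. -/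
def tvDist {k : ℕ} (p q : Fin k → ℝ) : ℝ :=
  (1 / 2) * ∑ i, |p i - q i|

/-- `T` is an `ε`-LDP channel: `T(r,c) ≤ e^ε T(r,c')` for all rows `r`, columns `c, c'`. -/
def IsLDP {ℓ k : ℕ} (ε : ℝ) (T : Matrix (Fin ℓ) (Fin k) ℝ) : Prop :=
  IsChannel T ∧ ∀ r c c', T r c ≤ Real.exp ε * T r c'

/-- The LP family of channels `J^{γ,ν}_{ℓ,k}`:
channels `T` with `T(j,i) ≤ γ_j T(j,i') + ν_j` for all rows `j` and columns `i, i'`. -/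
def IsLP {ℓ k : ℕ} (γ ν : Fin ℓ → ℝ) (T : Matrix (Fin ℓ) (Fin k) ℝ) : Prop :=
  IsChannel T ∧ ∀ (j : Fin ℓ) (i i' : Fin k), T j i ≤ γ j * T j i' + ν j

/-- Minimum entry of row `r` of `T`. -/
def rowMin {ℓ k : ℕ} (T : Matrix (Fin ℓ) (Fin k) ℝ) (r : Fin ℓ) : ℝ :=
  sInf (Set.range fun c => T r c)

/-- Maximum entry of row `r` of `T`. -/
def rowMax {ℓ k : ℕ} (T : Matrix (Fin ℓ) (Fin k) ℝ) (r : Fin ℓ) : ℝ :=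
  sSup (Set.range fun c => T r c)

/-- The entry `T(r,c)` is min-tight: `T(r,c) = m_r` and `M_r = γ_r m_r + ν_r`. -/
def MinTight {ℓ k : ℕ} (γ ν : Fin ℓ → ℝ) (T : Matrix (Fin ℓ) (Fin k) ℝ)
    (r : Fin ℓ) (c : Fin k) : Prop :=
  T r c = rowMin T r ∧ rowMax T r = γ r * rowMin T r + ν r

/-- The entry `T(r,c)` is max-tight: `T(r,c) = M_r` and `M_r = γ_r m_r + ν_r`. -/
def MaxTight {ℓ k : ℕ} (γ ν : Fin ℓ → ℝ) (T : Matrix (Fin ℓ) (Fin k) ℝ)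
    (r : Fin ℓ) (c : Fin k) : Prop :=
  T r c = rowMax T r ∧ rowMax T r = γ r * rowMin T r + ν r


/-! ### Auxiliary machinery for `stmt11` -/

/-- The entry `T r i` participates in no tight upper constraint, hence can be increased. -/
def UpFree {k ℓ : ℕ} (γ ν : Fin ℓ → ℝ) (T : Matrix (Fin ℓ) (Fin k) ℝ)
    (r : Fin ℓ) (i : Fin k) : Prop :=
  ∀ i', T r i ≠ γ r * T r i' + ν r

/-- The entry `T r i` can be decreased. -/
def DnFree {k ℓ : ℕ} (γ ν : Fin ℓ → ℝ) (T : Matrix (Fin ℓ) (Fin k) ℝ)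
    (r : Fin ℓ) (i : Fin k) : Prop :=
  T r i ≠ 0 ∧ ∀ i', ¬(0 < γ r ∧ T r i' = γ r * T r i + ν r)

/-- An admissible (one-sided) perturbation direction at `T`. -/
def Adm {k ℓ : ℕ} (γ ν : Fin ℓ → ℝ) (T D : Matrix (Fin ℓ) (Fin k) ℝ) : Prop :=
  (∀ i, ∑ r, D r i = 0) ∧ (∀ r i, 0 < D r i → UpFree γ ν T r i) ∧
    (∀ r i, D r i < 0 → DnFree γ ν T r i)

lemma exists_min_pos {α : Type*} [Fintype α] (f : α → ℝ) (hf : ∀ a, 0 < f a) :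
    ∃ ε : ℝ, 0 < ε ∧ ∀ a, ε ≤ f a := by
  rcases isEmpty_or_nonempty α with h | h
  · exact ⟨1, one_pos, fun a => isEmptyElim a⟩
  · refine ⟨Finset.univ.inf' Finset.univ_nonempty f, ?_,
      fun a => Finset.inf'_le _ (Finset.mem_univ a)⟩
    rw [Finset.lt_inf'_iff]
    exact fun a _ => hf a

/-- Moving from `T` in an admissible direction stays in the LP family for small `ε`. -/
lemma adm_feasible {k ℓ : ℕ} (γ ν : Fin ℓ → ℝ) (T : Matrix (Fin ℓ) (Fin k) ℝ)
    (hγ : ∀ j, 0 ≤ γ j) (hT : IsLP γ ν T) (D : Matrix (Fin ℓ) (Fin k) ℝ)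
    (hD : Adm γ ν T D) :
    ∃ ε : ℝ, 0 < ε ∧ IsLP γ ν (Matrix.of fun x y => T x y + ε * D x y) := by
  rcases isEmpty_or_nonempty (Fin k) with hk | hk
  · exact ⟨1, one_pos, ⟨fun x y => isEmptyElim y, fun c => isEmptyElim c⟩,
      fun j i i' => isEmptyElim i⟩
  rcases isEmpty_or_nonempty (Fin ℓ) with hl | hl
  · exact absurd (hT.1.2 (Classical.arbitrary _)) (by simp [Finset.univ_eq_empty])
  have hpos1 : ∀ z : Fin ℓ × Fin k,
      0 < (if D z.1 z.2 < 0 then T z.1 z.2 / (2 * -D z.1 z.2) else 1) := by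
    intro z
    split_ifs with h
    · have h1 : 0 < T z.1 z.2 :=
        lt_of_le_of_ne (hT.1.1 z.1 z.2) (Ne.symm (hD.2.2 z.1 z.2 h).1)
      have h2 : (0:ℝ) < 2 * -D z.1 z.2 := by linarith
      exact div_pos h1 h2
    · exact one_pos
  have hpos2 : ∀ z : Fin ℓ × Fin k × Fin k,
      0 < (if γ z.1 * D z.1 z.2.2 - D z.1 z.2.1 < 0 then
        (γ z.1 * T z.1 z.2.2 + ν z.1 - T z.1 z.2.1) / -(γ z.1 * D z.1 z.2.2 - D z.1 z.2.1)
        else 1) := by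
    rintro ⟨x, i, i'⟩
    dsimp only
    split_ifs with h
    · have hle : T x i ≤ γ x * T x i' + ν x := hT.2 x i i'
      have h0 : 0 < γ x * T x i' + ν x - T x i := by
        rcases (sub_nonneg.mpr hle).lt_or_eq with hpos | heq
        · exact hpos
        · exfalso
          have htight : T x i = γ x * T x i' + ν x := by linarith
          have hDi : D x i ≤ 0 := by
            by_contra hc
            push_neg at hc
            exact (hD.2.1 x i hc) i' htight
          have hgD : 0 ≤ γ x * D x i' := by
            rcases (hγ x).eq_or_lt with h0' | h0'
            · rw [← h0', zero_mul]
            · have hnn : ¬(D x i' < 0) := fun hc =>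
                ((hD.2.2 x i' hc).2 i) ⟨h0', htight⟩
              exact mul_nonneg h0'.le (not_lt.mp hnn)
          linarith
      exact div_pos h0 (by linarith)
    · exact one_pos
  obtain ⟨e₁, he₁, hb₁⟩ := exists_min_pos _ hpos1
  obtain ⟨e₂, he₂, hb₂⟩ := exists_min_pos _ hpos2
  have hε : 0 < min e₁ e₂ := lt_min he₁ he₂
  refine ⟨min e₁ e₂, hε, ⟨⟨?_, ?_⟩, ?_⟩⟩
  · intro x y
    show 0 ≤ T x y + min e₁ e₂ * D x y
    rcases le_or_gt 0 (D x y) with h | h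
    · have := mul_nonneg hε.le h
      linarith [hT.1.1 x y]
    · have key : e₁ ≤ if D x y < 0 then T x y / (2 * -D x y) else 1 := hb₁ (x, y)
      rw [if_pos h] at key
      have h2 : min e₁ e₂ * (2 * -D x y) ≤ T x y :=
        (le_div_iff₀ (by linarith)).mp (le_trans (min_le_left _ _) key)
      nlinarith [hT.1.1 x y]
  · intro c
    show ∑ x, (T x c + min e₁ e₂ * D x c) = 1
    rw [Finset.sum_add_distrib, hT.1.2 c, ← Finset.mul_sum, hD.1 c, mul_zero, add_zero]
  · intro x i i'
    show T x i + min e₁ e₂ * D x i ≤ γ x * (T x i' + min e₁ e₂ * D x i') + ν x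
    rcases lt_or_ge (γ x * D x i' - D x i) 0 with h | h
    · have key : e₂ ≤ if γ x * D x i' - D x i < 0 then
          (γ x * T x i' + ν x - T x i) / -(γ x * D x i' - D x i) else 1 := hb₂ (x, i, i')
      rw [if_pos h] at key
      have h2 : min e₁ e₂ * -(γ x * D x i' - D x i) ≤ γ x * T x i' + ν x - T x i :=
        (le_div_iff₀ (by linarith)).mp (le_trans (min_le_right _ _) key)
      nlinarith
    · have h2 : 0 ≤ min e₁ e₂ * (γ x * D x i' - D x i) := mul_nonneg hε.le h
      nlinarith [hT.2 x i i']

/-- Vector supported on two rows. -/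
def pairFun {ℓ : ℕ} (r r' : Fin ℓ) (t : ℝ) : Fin ℓ → ℝ :=
  fun x => if x = r then t else if x = r' then -t else 0

lemma pairFun_sum {ℓ : ℕ} {r r' : Fin ℓ} (h : r ≠ r') (t : ℝ) :
    ∑ x, pairFun r r' t x = 0 := by
  have hsplit : ∀ x : Fin ℓ, pairFun r r' t x
      = (if x = r then t else 0) + (if x = r' then -t else 0) := by
    intro x
    unfold pairFun
    by_cases h1 : x = r
    · subst h1
      simp [h]
    · by_cases h2 : x = r' <;> simp [h1, h2, Ne.symm h]
  rw [Finset.sum_congr rfl fun x _ => hsplit x, Finset.sum_add_distrib]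
  simp

/-- Matrix supported on one column. -/
def sCol {k ℓ : ℕ} (c₀ : Fin k) (d : Fin ℓ → ℝ) : Matrix (Fin ℓ) (Fin k) ℝ :=
  Matrix.of fun x y => if y = c₀ then d x else 0

lemma sCol_apply {k ℓ : ℕ} (c₀ : Fin k) (d : Fin ℓ → ℝ) (x : Fin ℓ) (y : Fin k) :
    sCol c₀ d x y = if y = c₀ then d x else 0 := rfl

lemma sCol_mulVec {k ℓ : ℕ} (c₀ : Fin k) (d : Fin ℓ → ℝ) (w : Fin k → ℝ) :
    (sCol c₀ d).mulVec w = fun x => d x * w c₀ := by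
  funext x
  simp [sCol, Matrix.mulVec, dotProduct, ite_mul, zero_mul]

lemma sCol_colsum {k ℓ : ℕ} (c₀ : Fin k) (d : Fin ℓ → ℝ) (y : Fin k) :
    ∑ x, sCol c₀ d x y = if y = c₀ then ∑ x, d x else 0 := by
  by_cases h : y = c₀ <;> simp [sCol, h]

lemma adm_sCol {k ℓ : ℕ} (γ ν : Fin ℓ → ℝ) (T : Matrix (Fin ℓ) (Fin k) ℝ)
    (c₀ : Fin k) (r r' : Fin ℓ) (hrr : r ≠ r') (t : ℝ)
    (hu : 0 < t → UpFree γ ν T r c₀) (hd : 0 < t → DnFree γ ν T r' c₀)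
    (hu' : t < 0 → UpFree γ ν T r' c₀) (hd' : t < 0 → DnFree γ ν T r c₀) :
    Adm γ ν T (sCol c₀ (pairFun r r' t)) := by
  refine ⟨fun i => ?_, fun x y hpos => ?_, fun x y hneg => ?_⟩
  · rw [sCol_colsum]
    split_ifs with h
    · exact pairFun_sum hrr t
    · rfl
  · rw [sCol_apply] at hpos
    unfold pairFun at hpos
    split_ifs at hpos with h1 h2 h3
    · subst h1; subst h2; exact hu hpos
    · subst h1; subst h3; exact hu' (by linarith)
    · exact absurd hpos (lt_irrefl 0)
    · exact absurd hpos (lt_irrefl 0)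
  · rw [sCol_apply] at hneg
    unfold pairFun at hneg
    split_ifs at hneg with h1 h2 h3
    · subst h1; subst h2; exact hd' hneg
    · subst h1; subst h3; exact hd (by linarith)
    · exact absurd hneg (lt_irrefl 0)
    · exact absurd hneg (lt_irrefl 0)

lemma adm_add {k ℓ : ℕ} (γ ν : Fin ℓ → ℝ) (T : Matrix (Fin ℓ) (Fin k) ℝ)
    {D₁ D₂ : Matrix (Fin ℓ) (Fin k) ℝ}
    (h₁ : Adm γ ν T D₁) (h₂ : Adm γ ν T D₂)
    (hdisj : ∀ x y, D₁ x y = 0 ∨ D₂ x y = 0) : Adm γ ν T (D₁ + D₂) := by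
  refine ⟨fun i => ?_, fun x y hpos => ?_, fun x y hneg => ?_⟩
  · simp only [Matrix.add_apply]
    rw [Finset.sum_add_distrib, h₁.1 i, h₂.1 i, add_zero]
  · rw [Matrix.add_apply] at hpos
    rcases hdisj x y with h | h
    · rw [h, zero_add] at hpos; exact h₂.2.1 x y hpos
    · rw [h, add_zero] at hpos; exact h₁.2.1 x y hpos
  · rw [Matrix.add_apply] at hneg
    rcases hdisj x y with h | h
    · rw [h, zero_add] at hneg; exact h₂.2.2 x y hneg
    · rw [h, add_zero] at hneg; exact h₁.2.2 x y hneg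

/-- A channel in the LP family with more than `2ℓ²` distinct columns does not produce an
extreme point of the joint range. -/
theorem stmt11 (k ℓ : ℕ) (γ ν : Fin ℓ → ℝ) (hγ : ∀ j, 0 ≤ γ j) (hν : ∀ j, 0 ≤ ν j)
    (p q : Fin k → ℝ) (hp : IsDist p) (hq : IsDist q) (hpq : ∀ i, 0 < p i + q i)
    (hlr : Function.Injective
      (fun i => if q i = 0 then (⊤ : EReal) else ((p i / q i : ℝ) : EReal)))
    (A : Set ((Fin ℓ → ℝ) × (Fin ℓ → ℝ)))
    (hA : A = {z | ∃ S : Matrix (Fin ℓ) (Fin k) ℝ,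
        IsLP γ ν S ∧ z = (S.mulVec p, S.mulVec q)})
    (T : Matrix (Fin ℓ) (Fin k) ℝ) (hT : IsLP γ ν T)
    (hcols : 2 * ℓ ^ 2 < (Finset.univ.image (fun c => fun r => T r c)).card) :
    (T.mulVec p, T.mulVec q) ∉ A.extremePoints ℝ := by
  intro hx
  rw [mem_extremePoints] at hx
  -- nonemptiness
  have hk : Nonempty (Fin k) := by
    rcases isEmpty_or_nonempty (Fin k) with h | h
    · rw [Finset.univ_eq_empty, Finset.image_empty, Finset.card_empty] at hcols
      exact absurd hcols (Nat.not_lt_zero _)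
    · exact h
  have hl : Nonempty (Fin ℓ) := by
    rcases isEmpty_or_nonempty (Fin ℓ) with h | h
    · have h1 := hT.1.2 hk.some
      rw [Finset.univ_eq_empty, Finset.sum_empty] at h1
      exact absurd h1 (by norm_num)
    · exact h
  -- Key consequence of extremality
  have hzero : ∀ D₁ D₂ : Matrix (Fin ℓ) (Fin k) ℝ, Adm γ ν T D₁ → Adm γ ν T D₂ →
      (∀ x, D₁.mulVec p x + D₂.mulVec p x = 0) →
      (∀ x, D₁.mulVec q x + D₂.mulVec q x = 0) →
      D₁.mulVec p = 0 ∧ D₁.mulVec q = 0 := by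
    intro D₁ D₂ h1 h2 hp0 hq0
    obtain ⟨ε₁, hε₁, hM₁⟩ := adm_feasible γ ν T hγ hT D₁ h1
    obtain ⟨ε₂, hε₂, hM₂⟩ := adm_feasible γ ν T hγ hT D₂ h2
    have hd : (0:ℝ) < ε₁ + ε₂ := by linarith
    have hne : (ε₁ + ε₂ : ℝ) ≠ 0 := ne_of_gt hd
    have hmv : ∀ (E : Matrix (Fin ℓ) (Fin k) ℝ) (ε : ℝ) (w : Fin k → ℝ) (x : Fin ℓ),
        (Matrix.of fun x y => T x y + ε * E x y).mulVec w x
          = T.mulVec w x + ε * E.mulVec w x := by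
      intro E ε w x
      simp only [Matrix.mulVec, Matrix.of_apply, dotProduct, add_mul, Finset.sum_add_distrib,
        Finset.mul_sum, mul_assoc]
    have key : ∀ (w : Fin k → ℝ), (∀ x, D₁.mulVec w x + D₂.mulVec w x = 0) →
        (ε₂/(ε₁+ε₂)) • ((Matrix.of fun x y => T x y + ε₁ * D₁ x y).mulVec w)
          + (ε₁/(ε₁+ε₂)) • ((Matrix.of fun x y => T x y + ε₂ * D₂ x y).mulVec w)
          = T.mulVec w := by
      intro w hw
      funext x
      have hveq : D₂.mulVec w x = -(D₁.mulVec w x) := by linarith [hw x]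
      simp only [Pi.add_apply, Pi.smul_apply, smul_eq_mul]
      rw [hmv, hmv, hveq]
      field_simp
      ring
    have hz₁A : ((Matrix.of fun x y => T x y + ε₁ * D₁ x y).mulVec p,
        (Matrix.of fun x y => T x y + ε₁ * D₁ x y).mulVec q) ∈ A := by
      rw [hA]; exact ⟨_, hM₁, rfl⟩
    have hz₂A : ((Matrix.of fun x y => T x y + ε₂ * D₂ x y).mulVec p,
        (Matrix.of fun x y => T x y + ε₂ * D₂ x y).mulVec q) ∈ A := by
      rw [hA]; exact ⟨_, hM₂, rfl⟩
    have hab : ε₂/(ε₁+ε₂) + ε₁/(ε₁+ε₂) = 1 := by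
      field_simp
      ring
    obtain ⟨hz1x, -⟩ := hx.2 _ hz₁A _ hz₂A
      ⟨ε₂/(ε₁+ε₂), ε₁/(ε₁+ε₂), div_pos hε₂ hd, div_pos hε₁ hd, hab, by
        rw [Prod.ext_iff]
        exact ⟨key p hp0, key q hq0⟩⟩
    rw [Prod.mk.injEq] at hz1x
    constructor
    · funext x
      have h2' := congrFun hz1x.1 x
      rw [hmv D₁ ε₁ p x] at h2'
      have hz : ε₁ * D₁.mulVec p x = 0 := by linarith
      simpa using (mul_eq_zero.mp hz).resolve_left (ne_of_gt hε₁)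
    · funext x
      have h2' := congrFun hz1x.2 x
      rw [hmv D₁ ε₁ q x] at h2'
      have hz : ε₁ * D₁.mulVec q x = 0 := by linarith
      simpa using (mul_eq_zero.mp hz).resolve_left (ne_of_gt hε₁)
  -- distinct likelihood ratios: nonvanishing cross products
  have hcross0 : ∀ i j : Fin k, i ≠ j → p i * q j - p j * q i ≠ 0 := by
    intro i j hij h0
    apply hij
    apply hlr
    show (if q i = 0 then (⊤:EReal) else ((p i / q i : ℝ) : EReal))
      = (if q j = 0 then (⊤:EReal) else ((p j / q j : ℝ) : EReal))
    by_cases hqi : q i = 0 <;> by_cases hqj : q j = 0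
    · rw [if_pos hqi, if_pos hqj]
    · exfalso
      have hpi : 0 < p i := by have := hpq i; rw [hqi] at this; linarith
      rw [hqi, mul_zero, sub_zero] at h0
      have hqj' : 0 < q j := lt_of_le_of_ne (hq.1 j) (Ne.symm hqj)
      nlinarith
    · exfalso
      have hpj : 0 < p j := by have := hpq j; rw [hqj] at this; linarith
      rw [hqj, mul_zero, zero_sub, neg_eq_zero] at h0
      have hqi' : 0 < q i := lt_of_le_of_ne (hq.1 i) (Ne.symm hqi)
      nlinarith
    · rw [if_neg hqi, if_neg hqj]
      have : p i / q i = p j / q j := by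
        rw [div_eq_div_iff hqi hqj]
        linear_combination h0
      exact congrArg Real.toEReal this
  -- order key
  set κ : Fin k → ℝ := fun i => q i / (p i + q i) with hκ
  have hκlt : ∀ i j : Fin k, κ i < κ j → 0 < p i * q j - p j * q i := by
    intro i j h
    simp only [hκ] at h
    rw [div_lt_div_iff₀ (hpq i) (hpq j)] at h
    nlinarith
  have hκne : ∀ i j : Fin k, i ≠ j → κ i ≠ κ j := by
    intro i j hij he
    apply hcross0 i j hij
    simp only [hκ] at he
    rw [div_eq_div_iff (ne_of_gt (hpq i)) (ne_of_gt (hpq j))] at he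
    linear_combination -he
  -- single-column move: no column has two fully free rows
  have hF1 : ∀ (i : Fin k) (r r' : Fin ℓ), r ≠ r' → UpFree γ ν T r i → DnFree γ ν T r i →
      UpFree γ ν T r' i → DnFree γ ν T r' i → False := by
    intro i r r' hrr hu hd hu' hd'
    have hadm1 : Adm γ ν T (sCol i (pairFun r r' 1)) :=
      adm_sCol γ ν T i r r' hrr 1 (fun _ => hu) (fun _ => hd')
        (fun h => absurd h (by norm_num)) (fun h => absurd h (by norm_num))
    have hadm2 : Adm γ ν T (sCol i (pairFun r r' (-1))) :=
      adm_sCol γ ν T i r r' hrr (-1) (fun h => absurd h (by norm_num))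
        (fun h => absurd h (by norm_num)) (fun _ => hu') (fun _ => hd)
    have hs : ∀ w : Fin k → ℝ, ∀ x,
        (sCol i (pairFun r r' 1)).mulVec w x + (sCol i (pairFun r r' (-1))).mulVec w x = 0 := by
      intro w x
      simp only [sCol_mulVec]
      unfold pairFun
      by_cases h1 : x = r
      · simp [h1]
      · by_cases h2 : x = r' <;> simp [h1, h2, Ne.symm hrr]
    obtain ⟨hP, hQ⟩ := hzero _ _ hadm1 hadm2 (hs p) (hs q)
    have hp' := congrFun hP r
    have hq' := congrFun hQ r
    simp only [sCol_mulVec, Pi.zero_apply] at hp' hq'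
    unfold pairFun at hp' hq'
    rw [if_pos rfl, one_mul] at hp' hq'
    have := hpq i
    linarith
  -- three-column flow move
  have hF2 : ∀ (a c b : Fin k) (r r' : Fin ℓ), r ≠ r' → κ a < κ c → κ c < κ b →
      UpFree γ ν T r c → DnFree γ ν T r' c → UpFree γ ν T r' a → DnFree γ ν T r a →
      UpFree γ ν T r' b → DnFree γ ν T r b → False := by
    intro a c b r r' hrr hac hcb huc hdc hua hda hub hdb
    have hK : 0 < p a * q b - p b * q a := hκlt a b (hac.trans hcb)
    have hL : 0 < p c * q b - p b * q c := hκlt c b hcb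
    have hM : 0 < p a * q c - p c * q a := hκlt a c hac
    have hab : a ≠ b := by
      intro h; subst h; exact lt_irrefl _ (hac.trans hcb)
    have hadm1 : Adm γ ν T (sCol c (pairFun r r' (p a * q b - p b * q a))) :=
      adm_sCol γ ν T c r r' hrr _ (fun _ => huc) (fun _ => hdc)
        (fun h => absurd h (by linarith)) (fun h => absurd h (by linarith))
    have hadmA : Adm γ ν T (sCol a (pairFun r r' (-(p c * q b - p b * q c)))) :=
      adm_sCol γ ν T a r r' hrr _ (fun h => absurd h (by linarith))
        (fun h => absurd h (by linarith)) (fun _ => hua) (fun _ => hda)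
    have hadmB : Adm γ ν T (sCol b (pairFun r r' (-(p a * q c - p c * q a)))) :=
      adm_sCol γ ν T b r r' hrr _ (fun h => absurd h (by linarith))
        (fun h => absurd h (by linarith)) (fun _ => hub) (fun _ => hdb)
    have hdisj : ∀ x y, sCol a (pairFun r r' (-(p c * q b - p b * q c))) x y = 0 ∨
        sCol b (pairFun r r' (-(p a * q c - p c * q a))) x y = 0 := by
      intro x y
      by_cases h : y = a
      · right
        rw [sCol_apply, if_neg]
        rw [h]
        exact hab
      · left
        rw [sCol_apply, if_neg h]
    have hadm2 : Adm γ ν T (sCol a (pairFun r r' (-(p c * q b - p b * q c)))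
        + sCol b (pairFun r r' (-(p a * q c - p c * q a)))) :=
      adm_add γ ν T hadmA hadmB hdisj
    have hs : ∀ w : Fin k → ℝ,
        w a * (p c * q b - p b * q c) + w b * (p a * q c - p c * q a)
          = w c * (p a * q b - p b * q a) →
        ∀ x, (sCol c (pairFun r r' (p a * q b - p b * q a))).mulVec w x
          + (sCol a (pairFun r r' (-(p c * q b - p b * q c)))
            + sCol b (pairFun r r' (-(p a * q c - p c * q a)))).mulVec w x = 0 := by
      intro w hid x
      rw [Matrix.add_mulVec]
      simp only [sCol_mulVec, Pi.add_apply]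
      unfold pairFun
      by_cases h1 : x = r
      · subst h1
        simp
        all_goals linarith
      · by_cases h2 : x = r'
        · subst h2
          simp [h1]
          all_goals linarith
        · simp only [if_neg h1, if_neg h2]
          ring
    obtain ⟨hP, hQ⟩ := hzero _ _ hadm1 hadm2 (hs p (by ring)) (hs q (by ring))
    have hp' := congrFun hP r
    have hq' := congrFun hQ r
    simp only [sCol_mulVec, Pi.zero_apply] at hp' hq'
    unfold pairFun at hp' hq'
    rw [if_pos rfl] at hp' hq'
    have hpc : p c = 0 := by
      rcases mul_eq_zero.mp hp' with h | h
      · exact absurd h (ne_of_gt hK)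
      · exact h
    have hqc : q c = 0 := by
      rcases mul_eq_zero.mp hq' with h | h
      · exact absurd h (ne_of_gt hK)
      · exact h
    have := hpq c
    linarith
  -- conflicts between distinct columns
  have hconf : ∀ i j : Fin k, (∃ x, T x i ≠ T x j) →
      ∃ r r' : Fin ℓ, r ≠ r' ∧ UpFree γ ν T r i ∧ DnFree γ ν T r' i ∧
        UpFree γ ν T r' j ∧ DnFree γ ν T r j := by
    intro i j hne
    have hlo : ∃ x, T x i < T x j := by
      by_contra hcon
      push_neg at hcon
      obtain ⟨x₀, hx₀⟩ := hne
      have hstrict : ∑ x, T x j < ∑ x, T x i :=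
        Finset.sum_lt_sum (fun x _ => hcon x)
          ⟨x₀, Finset.mem_univ _, lt_of_le_of_ne (hcon x₀) (fun h => hx₀ h.symm)⟩
      rw [hT.1.2 i, hT.1.2 j] at hstrict
      exact lt_irrefl _ hstrict
    have hhi : ∃ x, T x j < T x i := by
      by_contra hcon
      push_neg at hcon
      obtain ⟨x₀, hx₀⟩ := hne
      have hstrict : ∑ x, T x i < ∑ x, T x j :=
        Finset.sum_lt_sum (fun x _ => hcon x)
          ⟨x₀, Finset.mem_univ _, lt_of_le_of_ne (hcon x₀) hx₀⟩
      rw [hT.1.2 i, hT.1.2 j] at hstrict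
      exact lt_irrefl _ hstrict
    obtain ⟨r, hr⟩ := hlo
    obtain ⟨r', hr'⟩ := hhi
    have hrr : r ≠ r' := by
      intro h
      rw [h] at hr
      linarith
    refine ⟨r, r', hrr, ?_, ⟨?_, ?_⟩, ?_, ⟨?_, ?_⟩⟩
    · intro i' he
      have := hT.2 r j i'
      rw [← he] at this
      linarith
    · have := hT.1.1 r' j
      intro h0
      rw [h0] at hr'
      linarith
    · rintro i'' ⟨hγpos, htight⟩
      have h1 := hT.2 r' i'' j
      rw [htight] at h1
      have := (mul_le_mul_iff_right₀ hγpos).mp (by linarith : γ r' * T r' i ≤ γ r' * T r' j)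
      linarith
    · intro i' he
      have := hT.2 r' i i'
      rw [← he] at this
      linarith
    · have := hT.1.1 r i
      intro h0
      rw [h0] at hr
      linarith
    · rintro i'' ⟨hγpos, htight⟩
      have h1 := hT.2 r i'' i
      rw [htight] at h1
      have := (mul_le_mul_iff_right₀ hγpos).mp (by linarith : γ r * T r j ≤ γ r * T r i)
      linarith
  -- set of representative column indices
  set CC : Finset (Fin ℓ → ℝ) := Finset.univ.image (fun c => fun r => T r c) with hCC
  have hrep : ∀ v ∈ CC, ∃ c : Fin k, (fun x => T x c) = v := by
    intro v hv
    obtain ⟨c, -, hc⟩ := Finset.mem_image.mp hv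
    exact ⟨c, hc⟩
  choose g hg using hrep
  set S : Finset (Fin k) := CC.attach.image (fun v => g v.1 v.2) with hS
  have hcardS : S.card = CC.card := by
    rw [hS, Finset.card_image_of_injOn, Finset.card_attach]
    intro v₁ _ v₂ _ he
    have he' : g v₁.1 v₁.2 = g v₂.1 v₂.2 := he
    have e₁ : (fun x => T x (g v₁.1 v₁.2)) = v₁.1 := hg _ _
    have e₂ : (fun x => T x (g v₂.1 v₂.2)) = v₂.1 := hg _ _
    have : v₁.1 = v₂.1 := by rw [← e₁, ← e₂, he']
    exact Subtype.ext this
  have hScol : ∀ i ∈ S, ∀ j ∈ S, i ≠ j → ∃ x, T x i ≠ T x j := by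
    intro i hi j hj hij
    by_contra hcon
    push_neg at hcon
    obtain ⟨⟨v₁, hv₁⟩, -, h₁⟩ := Finset.mem_image.mp hi
    obtain ⟨⟨v₂, hv₂⟩, -, h₂⟩ := Finset.mem_image.mp hj
    have h₁' : g v₁ hv₁ = i := h₁
    have h₂' : g v₂ hv₂ = j := h₂
    have hcol1 : (fun x => T x i) = v₁ := by rw [← h₁']; exact hg v₁ hv₁
    have hcol2 : (fun x => T x j) = v₂ := by rw [← h₂']; exact hg v₂ hv₂
    have hv : v₁ = v₂ := by
      rw [← hcol1, ← hcol2]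
      funext x
      exact hcon x
    apply hij
    rw [← h₁', ← h₂']
    subst hv
    rfl
  -- the non-maximal elements
  set S' : Finset (Fin k) := S.filter (fun i => ∃ j ∈ S, κ i < κ j) with hS'
  have hnext : ∀ i ∈ S', ∃ j, j ∈ S ∧ κ i < κ j ∧ ∀ u ∈ S, κ i < κ u → κ j ≤ κ u := by
    intro i hi
    obtain ⟨-, j₀, hj₀S, hj₀⟩ := Finset.mem_filter.mp hi
    have hne : (S.filter (fun u => κ i < κ u)).Nonempty :=
      ⟨j₀, Finset.mem_filter.mpr ⟨hj₀S, hj₀⟩⟩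
    obtain ⟨j, hjmem, hjmin⟩ := Finset.exists_min_image _ κ hne
    obtain ⟨hjS, hjlt⟩ := Finset.mem_filter.mp hjmem
    exact ⟨j, hjS, hjlt, fun u hu hku => hjmin u (Finset.mem_filter.mpr ⟨hu, hku⟩)⟩
  choose nxt hn1 hn2 hn3 using hnext
  have hcd : ∀ i (hi : i ∈ S'), ∃ rr : Fin ℓ × Fin ℓ, rr.1 ≠ rr.2 ∧
      UpFree γ ν T rr.1 i ∧ DnFree γ ν T rr.2 i ∧
      UpFree γ ν T rr.2 (nxt i hi) ∧ DnFree γ ν T rr.1 (nxt i hi) := by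
    intro i hi
    have hiS : i ∈ S := Finset.mem_of_mem_filter _ hi
    have hij : i ≠ nxt i hi := by
      intro h
      have := hn2 i hi
      rw [← h] at this
      exact lt_irrefl _ this
    obtain ⟨r, r', hrr, h1, h2, h3, h4⟩ :=
      hconf i (nxt i hi) (hScol i hiS (nxt i hi) (hn1 i hi) hij)
    exact ⟨(r, r'), hrr, h1, h2, h3, h4⟩
  choose ρf hne1 hu1 hd1 hu2 hd2 using hcd
  have hcore : ∀ i₁ (h₁ : i₁ ∈ S') i₂ (h₂ : i₂ ∈ S'), κ i₁ < κ i₂ →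
      ρf i₁ h₁ = ρf i₂ h₂ → False := by
    intro i₁ h₁ i₂ h₂ hlt he
    have hi₂S : i₂ ∈ S := Finset.mem_of_mem_filter _ h₂
    have hj₁le : κ (nxt i₁ h₁) ≤ κ i₂ := hn3 i₁ h₁ i₂ hi₂S hlt
    rcases hj₁le.lt_or_eq with hlt2 | heq2
    · refine hF2 (nxt i₁ h₁) i₂ (nxt i₂ h₂) (ρf i₁ h₁).1 (ρf i₁ h₁).2 (hne1 i₁ h₁)
        hlt2 (hn2 i₂ h₂) ?_ ?_ ?_ ?_ ?_ ?_
      · rw [he]; exact hu1 i₂ h₂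
      · rw [he]; exact hd1 i₂ h₂
      · exact hu2 i₁ h₁
      · exact hd2 i₁ h₁
      · rw [he]; exact hu2 i₂ h₂
      · rw [he]; exact hd2 i₂ h₂
    · have hj₁i₂ : nxt i₁ h₁ = i₂ := by
        by_contra hne2
        exact hκne _ _ hne2 heq2
      refine hF1 i₂ (ρf i₁ h₁).1 (ρf i₁ h₁).2 (hne1 i₁ h₁) ?_ ?_ ?_ ?_
      · rw [he]; exact hu1 i₂ h₂
      · exact hj₁i₂ ▸ hd2 i₁ h₁
      · exact hj₁i₂ ▸ hu2 i₁ h₁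
      · rw [he]; exact hd1 i₂ h₂
  -- injection into ordered row pairs
  have hℓpos : 0 < ℓ := hl.some.pos
  set f : Fin k → Fin ℓ × Fin ℓ :=
    fun i => if h : i ∈ S' then ρf i h else (hl.some, hl.some) with hf
  have hS'card : S'.card ≤ (Finset.univ : Finset (Fin ℓ × Fin ℓ)).card := by
    apply Finset.card_le_card_of_injOn f (fun i _ => Finset.mem_univ _)
    intro i₁ h₁m i₂ h₂m heq
    have h₁ : i₁ ∈ S' := h₁m
    have h₂ : i₂ ∈ S' := h₂m
    by_contra hne
    rw [hf] at heq
    simp only [dif_pos h₁, dif_pos h₂] at heq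
    rcases lt_trichotomy (κ i₁) (κ i₂) with hlt | heq' | hlt
    · exact hcore i₁ h₁ i₂ h₂ hlt heq
    · exact hκne _ _ hne heq'
    · exact hcore i₂ h₂ i₁ h₁ hlt heq.symm
  have hone : (S.filter (fun i => ¬∃ j ∈ S, κ i < κ j)).card ≤ 1 := by
    rw [Finset.card_le_one]
    intro x hx' y hy'
    obtain ⟨hxS, hxm⟩ := Finset.mem_filter.mp hx'
    obtain ⟨hyS, hym⟩ := Finset.mem_filter.mp hy'
    by_contra hne
    rcases lt_trichotomy (κ x) (κ y) with h | h | h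
    · exact hxm ⟨y, hyS, h⟩
    · exact hκne x y hne h
    · exact hym ⟨x, hxS, h⟩
  have hsplit : S'.card + (S.filter (fun i => ¬∃ j ∈ S, κ i < κ j)).card = S.card := by
    rw [hS']
    exact Finset.card_filter_add_card_filter_not _
  have huniv : (Finset.univ : Finset (Fin ℓ × Fin ℓ)).card = ℓ * ℓ := by simp
  rw [pow_two] at hcols
  rw [huniv] at hS'card
  have hmul : 0 < ℓ * ℓ := Nat.mul_pos hℓpos hℓpos
  rw [← hcardS] at hcols
  omega
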